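/- Let L ⊂ ℝ² be a convex body containing the origin in its interior whose gauge function g(x) = ‖x‖_L is differentiable on ℝ² \ {0}. Let h : ℝ → ℝ be a 2π-periodic, twice continuously differentiable, strictly positive function with h(θ) + h″(θ) > 0 for all θ, and define x(θ) = h(θ)u(θ) + h′(θ)u′(θ), where u(θ) = (cos θ, sin θ) and u′(θ) = (−sin θ, cos θ). If θ₀ ∈ [0, 2π] is a minimizer of θ ↦ g(x(θ)), then ⟨∇g(x(θ₀)), u(θ₀)⟩ = g(x(θ₀)) / h(θ₀) > 0. -/

import Mathlib

open Filter Set Real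
open scoped RealInnerProductSpace

/-- The unit vector `u(θ) = (cos θ, sin θ)` in the Euclidean plane. -/
noncomputable def uvec (θ : ℝ) : EuclideanSpace ℝ (Fin 2) :=
  (WithLp.equiv 2 (Fin 2 → ℝ)).symm ![Real.cos θ, Real.sin θ]

/-- The unit vector `u′(θ) = (−sin θ, cos θ)` in the Euclidean plane. -/
noncomputable def uvec' (θ : ℝ) : EuclideanSpace ℝ (Fin 2) :=
  (WithLp.equiv 2 (Fin 2 → ℝ)).symm ![-Real.sin θ, Real.cos θ]

lemma hasDerivAt_uvec (θ : ℝ) : HasDerivAt uvec (uvec' θ) θ := by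
  have hf : HasDerivAt (fun t => ![Real.cos t, Real.sin t] : ℝ → Fin 2 → ℝ)
      ![-Real.sin θ, Real.cos θ] θ := by
    rw [hasDerivAt_pi]
    intro i
    fin_cases i <;> simp <;> [exact (Real.hasDerivAt_cos θ); exact (Real.hasDerivAt_sin θ)]
  have := ((PiLp.continuousLinearEquiv 2 ℝ (fun _ : Fin 2 => ℝ)).symm :
      (Fin 2 → ℝ) →L[ℝ] EuclideanSpace ℝ (Fin 2)).hasFDerivAt.comp_hasDerivAt θ hf
  exact this

lemma hasDerivAt_uvec' (θ : ℝ) : HasDerivAt uvec' (-uvec θ) θ := by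
  have hf : HasDerivAt (fun t => ![-Real.sin t, Real.cos t] : ℝ → Fin 2 → ℝ)
      ![-Real.cos θ, -Real.sin θ] θ := by
    rw [hasDerivAt_pi]
    intro i
    fin_cases i <;> simp
    · exact (Real.hasDerivAt_sin θ).neg
    · exact (Real.hasDerivAt_cos θ)
  have := ((PiLp.continuousLinearEquiv 2 ℝ (fun _ : Fin 2 => ℝ)).symm :
      (Fin 2 → ℝ) →L[ℝ] EuclideanSpace ℝ (Fin 2)).hasFDerivAt.comp_hasDerivAt θ hf
  have hneg : (-uvec θ : EuclideanSpace ℝ (Fin 2)) =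
      (WithLp.equiv 2 (Fin 2 → ℝ)).symm ![-Real.cos θ, -Real.sin θ] := by
    apply PiLp.ext; intro i; fin_cases i <;> simp [uvec]
  rw [hneg]
  exact this

lemma inner_uvec_uvec (θ : ℝ) : ⟪uvec θ, uvec θ⟫ = (1:ℝ) := by
  rw [uvec, PiLp.inner_apply]; simp [Fin.sum_univ_two]

lemma inner_uvec'_uvec (θ : ℝ) : ⟪uvec' θ, uvec θ⟫ = (0:ℝ) := by
  simp [uvec, uvec', PiLp.inner_apply, Fin.sum_univ_two]; ring

lemma euler {g : EuclideanSpace ℝ (Fin 2) → ℝ}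
    (hhom : ∀ r : ℝ, 0 ≤ r → ∀ y, g (r • y) = r * g y)
    {y : EuclideanSpace ℝ (Fin 2)} (hg : DifferentiableAt ℝ g y) :
    fderiv ℝ g y y = g y := by
  have hs : HasDerivAt (fun r : ℝ => r • y) y 1 := by
    simpa using (hasDerivAt_id (1:ℝ)).smul_const y
  have h1 : HasDerivAt (fun r : ℝ => g (r • y)) (fderiv ℝ g y y) 1 := by
    have := HasFDerivAt.comp_hasDerivAt 1
      (by rw [show ((1:ℝ) • y) = y from one_smul ℝ y] at *; exact hg.hasFDerivAt) hs
    exact this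
  have h2 : HasDerivAt (fun r : ℝ => g (r • y)) (g y) 1 := by
    have heq : (fun r : ℝ => r * g y) =ᶠ[nhds (1:ℝ)] fun r => g (r • y) := by
      filter_upwards [eventually_gt_nhds (show (0:ℝ) < 1 by norm_num)] with r hr
      rw [hhom r hr.le]
    exact (hasDerivAt_mul_const (g y)).congr_of_eventuallyEq heq.symm
  exact h1.unique h2

theorem stmt_15
    (L : Set (EuclideanSpace ℝ (Fin 2)))
    (hLcomp : IsCompact L) (hLconv : Convex ℝ L)
    (hL0 : (0 : EuclideanSpace ℝ (Fin 2)) ∈ interior L)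
    (hgdiff : ∀ x : EuclideanSpace ℝ (Fin 2), x ≠ 0 → DifferentiableAt ℝ (gauge L) x)
    (h : ℝ → ℝ) (h2 : ContDiff ℝ 2 h) (hper : Function.Periodic h (2 * π))
    (hpos : ∀ θ, 0 < h θ) (hcurv : ∀ θ, 0 < h θ + deriv (deriv h) θ)
    (x : ℝ → EuclideanSpace ℝ (Fin 2))
    (hx : ∀ θ, x θ = h θ • uvec θ + deriv h θ • uvec' θ)
    (θ₀ : ℝ) (hθ₀ : θ₀ ∈ Icc 0 (2 * π))
    (hmin : ∀ θ ∈ Icc 0 (2 * π), gauge L (x θ₀) ≤ gauge L (x θ)) :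
    ⟪gradient (gauge L) (x θ₀), uvec θ₀⟫ = gauge L (x θ₀) / h θ₀ ∧
    0 < gauge L (x θ₀) / h θ₀ := by
  -- basic differentiability of h
  have h2' : ContDiff ℝ ((1:ℕ) + 1) h := by
    convert h2 using 2 <;> norm_num
  have hd1 : Differentiable ℝ h := h2.differentiable (by norm_num)
  have hd2 : Differentiable ℝ (deriv h) :=
    ((contDiff_succ_iff_deriv.mp h2').2.2).differentiable (by norm_num)
  -- inner product of x with uvec
  have hinner : ∀ θ, ⟪x θ, uvec θ⟫ = h θ := by
    intro θ
    rw [hx θ, inner_add_left, real_inner_smul_left, real_inner_smul_left,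
      inner_uvec_uvec, inner_uvec'_uvec]
    ring
  have hxne : ∀ θ, x θ ≠ 0 := by
    intro θ hθ
    have := hinner θ
    rw [hθ, inner_zero_left] at this
    exact absurd this.symm (ne_of_gt (hpos θ))
  -- derivative of x
  have hxd : ∀ θ, HasDerivAt x ((h θ + deriv (deriv h) θ) • uvec' θ) θ := by
    intro θ
    have h1 : HasDerivAt (fun t => h t • uvec t)
        (h θ • uvec' θ + deriv h θ • uvec θ) θ :=
      ((hd1 θ).hasDerivAt).smul (hasDerivAt_uvec θ)
    have hh2 : HasDerivAt (fun t => deriv h t • uvec' t)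
        (deriv h θ • (-uvec θ) + deriv (deriv h) θ • uvec' θ) θ :=
      ((hd2 θ).hasDerivAt).smul (hasDerivAt_uvec' θ)
    have := h1.add hh2
    rw [funext hx]
    refine this.congr_deriv ?_
    module
  -- absorbent & homogeneity
  have habs : Absorbent ℝ L := absorbent_nhds_zero (mem_interior_iff_mem_nhds.mp hL0)
  have hhom : ∀ r : ℝ, 0 ≤ r → ∀ y, gauge L (r • y) = r * gauge L y := by
    intro r hr y
    rw [gauge_smul_of_nonneg hr, smul_eq_mul]
  -- positivity of gauge at x θ₀
  obtain ⟨R, hR0, hLR⟩ := hLcomp.isBounded.subset_ball_lt 0 0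
  have hgpos : 0 < gauge L (x θ₀) := by
    have h1 : gauge (Metric.ball (0 : EuclideanSpace ℝ (Fin 2)) R) (x θ₀) ≤ gauge L (x θ₀) :=
      gauge_mono habs hLR (x θ₀)
    rw [gauge_ball hR0.le] at h1
    have : 0 < ‖x θ₀‖ / R := div_pos (norm_pos_iff.mpr (hxne θ₀)) hR0
    linarith
  -- periodicity of x
  have hderper : ∀ t, deriv h (t + 2 * π) = deriv h t := by
    intro t
    have e1 : deriv (fun s => h (s + 2 * π)) t = deriv h (t + 2 * π) :=
      deriv_comp_add_const ..
    rw [← e1]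
    congr 1
    funext s
    exact hper s
  have huper : ∀ t, uvec (t + 2 * π) = uvec t := by
    intro t; unfold uvec; rw [Real.cos_add_two_pi, Real.sin_add_two_pi]
  have hu'per : ∀ t, uvec' (t + 2 * π) = uvec' t := by
    intro t; unfold uvec'; rw [Real.cos_add_two_pi, Real.sin_add_two_pi]
  have hxper : ∀ t, x (t + 2 * π) = x t := by
    intro t
    rw [hx, hx, hper t, hderper t, huper t, hu'per t]
  -- global minimum
  have hGmin : ∀ t, gauge L (x θ₀) ≤ gauge L (x t) := by
    intro t
    obtain ⟨t', ht', heq⟩ :=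
      (show Function.Periodic (fun s => gauge L (x s)) (2 * π) from fun s => by
        simp only [hxper s]).exists_mem_Ico₀ Real.two_pi_pos t
    rw [heq]
    exact hmin t' ⟨ht'.1, ht'.2.le⟩
  have hloc : IsLocalMin (fun t => gauge L (x t)) θ₀ := Filter.Eventually.of_forall hGmin
  -- derivative of gauge ∘ x is zero at θ₀
  have hgd := hgdiff (x θ₀) (hxne θ₀)
  have hGd : HasDerivAt (fun t => gauge L (x t))
      (fderiv ℝ (gauge L) (x θ₀) ((h θ₀ + deriv (deriv h) θ₀) • uvec' θ₀)) θ₀ :=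
    hgd.hasFDerivAt.comp_hasDerivAt θ₀ (hxd θ₀)
  have hzero := hloc.hasDerivAt_eq_zero hGd
  have hu'0 : fderiv ℝ (gauge L) (x θ₀) (uvec' θ₀) = 0 := by
    rw [map_smul, smul_eq_mul] at hzero
    exact (mul_eq_zero.mp hzero).resolve_left (ne_of_gt (hcurv θ₀))
  -- Euler identity
  have heul : fderiv ℝ (gauge L) (x θ₀) (x θ₀) = gauge L (x θ₀) := euler hhom hgd
  have hexp : fderiv ℝ (gauge L) (x θ₀) (x θ₀) =
      h θ₀ * fderiv ℝ (gauge L) (x θ₀) (uvec θ₀) := by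
    have e : fderiv ℝ (gauge L) (x θ₀) (x θ₀)
        = fderiv ℝ (gauge L) (x θ₀) (h θ₀ • uvec θ₀ + deriv h θ₀ • uvec' θ₀) := by
      rw [← hx θ₀]
    rw [e, map_add, map_smul, map_smul, smul_eq_mul, smul_eq_mul, hu'0]
    ring
  have hval : fderiv ℝ (gauge L) (x θ₀) (uvec θ₀) = gauge L (x θ₀) / h θ₀ := by
    rw [hexp] at heul
    rw [eq_div_iff (hpos θ₀).ne']
    linear_combination heul
  -- gradient
  have hgrad : ⟪gradient (gauge L) (x θ₀), uvec θ₀⟫ =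
      fderiv ℝ (gauge L) (x θ₀) (uvec θ₀) := by
    have hg := hgd.hasGradientAt
    rw [hasGradientAt_iff_hasFDerivAt] at hg
    rw [hg.fderiv]
    exact (InnerProductSpace.toDual_apply_apply).symm
  refine ⟨by rw [hgrad, hval], div_pos hgpos (hpos θ₀)⟩
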